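/- Let D = (Σ, Const) be a precedence-only declarative process, define M := Σ \ { a ∈ Σ : there exist distinct b,c ∈ Σ with b ≲occ c, c ≲occ b, and b ≲occ a }, and let I ∈ PossIm(D). Then for all a,b ∈ I, a ⪯_I b if and only if a ≲occ b restricted to M holds; that is, (I, ⪯_I) is an induced subposet of (M, ≲occ|_M). -/

import Mathlib

/-- The restriction `r|_I := r ∩ (I × I)` of a relation to a set. -/
def restrictRel {α : Type*} (r : α → α → Prop) (I : Set α) : α → α → Prop :=
  fun a b => a ∈ I ∧ b ∈ I ∧ r a b

/-- A (first-passage) trace of a precedence-only declarative process. -/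
def IsTraceP {α : Type*} (Prec : α → α → Prop) (τ : List α) : Prop :=
  τ.Nodup ∧ ∀ a b, Prec a b → b ∈ τ → [a, b].Sublist τ

/-- The image (set of terms) of the sequence `τ`. -/
def imList {α : Type*} (τ : List α) : Set α := {x | x ∈ τ}

/-- The set `M := Σ \ { a : ∃ distinct b, c with b ≲occ c, c ≲occ b and b ≲occ a }`. -/
def Mset {α : Type*} (occ : α → α → Prop) : Set α :=
  {a | ¬ ∃ b c : α, b ≠ c ∧ occ b c ∧ occ c b ∧ occ b a}

/-- In a nodup list, a pair sublist has strictly increasing indices. -/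
lemma pair_sublist_indexOf_lt {α : Type*} [DecidableEq α] {a b : α} {τ : List α}
    (hnd : τ.Nodup) (hsub : [a, b].Sublist τ) : τ.idxOf a < τ.idxOf b := by
  rw [List.cons_sublist_iff] at hsub
  obtain ⟨r₁, r₂, rfl, ha1, hb2⟩ := hsub
  have hb2 : b ∈ r₂ := (List.singleton_sublist).1 hb2
  have hdisj := (List.nodup_append.1 hnd).2.2
  have hb1 : b ∉ r₁ := fun h => hdisj _ h _ hb2 rfl
  rw [List.idxOf_append_of_mem ha1, List.idxOf_append_of_notMem hb1]
  calc r₁.idxOf a < r₁.length := List.idxOf_lt_length_iff.2 ha1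
    _ ≤ r₁.length + r₂.idxOf b := Nat.le_add_right _ _

/-- Along a `ReflTransGen Prec` chain ending in the trace, every element is in
the trace and the index is monotone. -/
lemma trace_chain_mem_and_indexOf_le {α : Type*} [DecidableEq α]
    {Prec : α → α → Prop} {τ : List α} (hnd : τ.Nodup)
    (htr : ∀ a b, Prec a b → b ∈ τ → [a, b].Sublist τ)
    {x y : α} (h : Relation.ReflTransGen Prec x y) (hy : y ∈ τ) :
    x ∈ τ ∧ τ.idxOf x ≤ τ.idxOf y := by
  induction h using Relation.ReflTransGen.head_induction_on with
  | refl => exact ⟨hy, le_rfl⟩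
  | head hac _ ih =>
    obtain ⟨hc, hle⟩ := ih
    have hsub := htr _ _ hac hc
    have hmem : _ ∈ τ := hsub.mem (List.mem_cons_self)
    exact ⟨hmem, le_trans (le_of_lt (pair_sublist_indexOf_lt hnd hsub)) hle⟩

/-- The chain can be restricted to the image of the trace. -/
lemma trace_chain_restrict {α : Type*}
    {Prec : α → α → Prop} {τ : List α}
    (htr : ∀ a b, Prec a b → b ∈ τ → [a, b].Sublist τ)
    {x y : α} (h : Relation.ReflTransGen Prec x y) (hy : y ∈ τ) :
    x ∈ τ ∧ Relation.ReflTransGen (restrictRel Prec (imList τ)) x y := by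
  induction h using Relation.ReflTransGen.head_induction_on with
  | refl => exact ⟨hy, Relation.ReflTransGen.refl⟩
  | head hac _ ih =>
    obtain ⟨hc, hchain⟩ := ih
    have ha : _ ∈ τ := (htr _ _ hac hc).mem (List.mem_cons_self)
    exact ⟨ha, Relation.ReflTransGen.head ⟨ha, hc, hac⟩ hchain⟩

/-- for a precedence-only declarative process and
`I ∈ PossIm(D)`, the poset `(I, ⪯_I)` (where `⪯_I = (Prec|_I)^⊕`) is an
induced subposet of `(M, ≲occ|_M)`: we have `I ⊆ M`, and for all `a, b ∈ I`,
`a ⪯_I b` holds iff `a ≲occ b` (as elements of `M`). -/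
theorem prec_only_induced_subposet {α : Type*} [Fintype α]
    (Prec : α → α → Prop) (hP : ∀ a b, Prec a b → a ≠ b)
    (I : Set α) (hI : ∃ τ : List α, IsTraceP Prec τ ∧ imList τ = I) :
    I ⊆ Mset (Relation.ReflTransGen Prec) ∧
      ∀ a ∈ I, ∀ b ∈ I,
        (Relation.ReflTransGen (restrictRel Prec I) a b ↔
          Relation.ReflTransGen Prec a b) := by
  classical
  obtain ⟨τ, ⟨hnd, htr⟩, rfl⟩ := hI
  constructor
  · intro a ha ⟨b, c, hbc, hb_c, hc_b, hb_a⟩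
    have hb : b ∈ τ := (trace_chain_restrict htr hb_a ha).1
    have hc : c ∈ τ := (trace_chain_restrict htr hc_b hb).1
    have h1 := (trace_chain_mem_and_indexOf_le hnd htr hb_c hc).2
    have h2 := (trace_chain_mem_and_indexOf_le hnd htr hc_b hb).2
    have heq : τ.idxOf b = τ.idxOf c := le_antisymm h1 h2
    apply hbc
    have hlb := List.idxOf_lt_length_iff.2 hb
    have := List.idxOf_get (a := b) (l := τ) hlb
    have := List.idxOf_get (a := c) (l := τ) (List.idxOf_lt_length_iff.2 hc)
    calc b = τ.get ⟨τ.idxOf b, hlb⟩ := by rw [List.idxOf_get]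
      _ = τ.get ⟨τ.idxOf c, heq ▸ hlb⟩ := by congr 1; exact Fin.ext heq
      _ = c := by rw [List.idxOf_get]
  · intro a ha b hb
    constructor
    · intro h
      exact Relation.ReflTransGen.mono (fun x y (hxy : restrictRel Prec (imList τ) x y) => hxy.2.2) a b h
    · intro h
      exact (trace_chain_restrict htr h hb).2
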